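/- Let ℓ ≥ 2 have binary power representation L = (n_1, n_2, …, n_k) and let T_L be the corresponding maximal proper binary tree, where c_i denotes the root of the complete binary tree with 2^{n_i} leaves attached at v_i. If n_i = n_{i+1} + 1 for some fixed i with 2 ≤ i ≤ k−1, then R(T_L) = R(T*), where T* is obtained from T_L by deleting the edges v_{i+1}c_{i+1} and v_ic_i and adding the edges v_{i+1}c_i and v_ic_{i+1} (swapping the subtrees rooted at c_i and c_{i+1}). -/

import Mathlib

/-- Proper binary trees: every internal vertex has exactly two children. -/
inductive BTree : Type
  | leaf : BTree
  | node : BTree → BTree → BTree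
  deriving DecidableEq

namespace BTree

/-- The rank (protection number) of the root of a proper binary tree:
the minimum distance from the root to a leaf descendant. -/
def rank : BTree → ℕ
  | leaf => 0
  | node l r => min l.rank r.rank + 1

/-- The security of a proper binary tree: the sum of the ranks of all vertices. -/
def security : BTree → ℕ
  | leaf => 0
  | node l r => (node l r).rank + l.security + r.security

/-- The number of leaves. -/
def leafCount : BTree → ℕ
  | leaf => 1
  | node l r => l.leafCount + r.leafCount

/-- The height: maximum distance from the root to a leaf. -/
def height : BTree → ℕ
  | leaf => 0
  | node l r => max l.height r.height + 1

/-- A tree is complete if all leaves are at the same depth. -/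
def IsComplete : BTree → Prop
  | leaf => True
  | node l r => IsComplete l ∧ IsComplete r ∧ l.height = r.height

/-- The subtree at a given position (a list of directions from the root;
`false` = first child, `true` = second child), if the position exists. -/
def subtreeAt : BTree → List Bool → Option BTree
  | t, [] => some t
  | leaf, _ :: _ => none
  | node l _, false :: p => subtreeAt l p
  | node _ r, true :: p => subtreeAt r p

/-- Replace the subtree at a given position by `s`. -/
def replaceAt : BTree → List Bool → BTree → BTree
  | _, [], s => s
  | leaf, _ :: _, _ => leaf
  | node l r, false :: p, s => node (replaceAt l p s) r
  | node l r, true :: p, s => node l (replaceAt r p s)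

/-- The rank of the vertex at position `p` in `T` (rank of a vertex only depends
on the subtree consisting of the vertex and its descendants). -/
def rankAt (T : BTree) (p : List Bool) : ℕ := ((T.subtreeAt p).map rank).getD 0

/-- The vertex at position `p` in `T` is saturated: its subtree is complete, but the
subtree of none of its (proper) ancestors is complete. -/
def Saturated (T : BTree) (p : List Bool) : Prop :=
  (∃ s, T.subtreeAt p = some s ∧ IsComplete s) ∧
  ∀ q s, q <+: p → q ≠ p → T.subtreeAt q = some s → ¬ IsComplete s

/-- The complete binary tree of height `m` (with `2 ^ m` leaves). -/
def completeTree : ℕ → BTree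
  | 0 => leaf
  | m + 1 => node (completeTree m) (completeTree m)

/-- The tree `T_L` for `L = (n₁, …, n_k)`: a binary caterpillar whose spine vertices carry
complete binary trees with `2 ^ nᵢ` leaves. -/
def TL : List ℕ → BTree
  | [] => leaf
  | n :: ns => ns.foldl (fun acc m => node acc (completeTree m)) (completeTree n)

/-- Helper for the almost complete tree: a complete binary tree of height `m`
whose leftmost `r` leaves each receive two leaf children. -/
def buildF : ℕ → ℕ → BTree
  | 0, r => if r = 0 then leaf else node leaf leaf
  | m + 1, r => node (buildF m (min r (2 ^ m))) (buildF m (r - 2 ^ m))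

/-- The almost complete ("good") tree `F(ℓ)` on `ℓ` leaves. -/
def F (ℓ : ℕ) : BTree := buildF (Nat.log 2 ℓ) (ℓ - 2 ^ Nat.log 2 ℓ)

end BTree


namespace BTree

lemma rank_completeTree (m : ℕ) : (completeTree m).rank = m := by
  induction m with
  | zero => rfl
  | succ n ih => simp [completeTree, rank, ih]

lemma rank_fold_gt (ns : List ℕ) : ∀ (t : BTree) (x a : ℕ),
    List.Chain (· > ·) x (ns ++ [a]) → x ≤ t.rank →
    a < (List.foldl (fun acc m => node acc (completeTree m)) t ns).rank := by
  induction ns with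
  | nil =>
      intro t x a h ht
      rw [List.nil_append] at h
      have hxa := List.rel_of_chain_cons h
      simp only [List.foldl_nil]
      omega
  | cons m ns ih =>
      intro t x a h ht
      rw [List.cons_append, List.Chain, List.isChain_cons_cons] at h
      obtain ⟨hxm, hc⟩ := h
      simp only [List.foldl_cons]
      apply ih _ m a hc
      show m ≤ (min t.rank (completeTree m).rank + 1)
      rw [rank_completeTree]
      omega

lemma sec_fold_congr (ns : List ℕ) : ∀ (t1 t2 : BTree) (b : ℕ),
    List.Chain (· > ·) b ns → b < t1.rank → b < t2.rank →
    t1.security = t2.security →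
    (List.foldl (fun acc m => node acc (completeTree m)) t1 ns).security =
    (List.foldl (fun acc m => node acc (completeTree m)) t2 ns).security := by
  induction ns with
  | nil => intro t1 t2 b _ _ _ h; simpa using h
  | cons m ns ih =>
      intro t1 t2 b hc h1 h2 hsec
      rw [List.Chain, List.isChain_cons_cons] at hc
      obtain ⟨hbm, hc⟩ := hc
      simp only [List.foldl_cons]
      apply ih _ _ m hc
      · show m < min t1.rank (completeTree m).rank + 1
        rw [rank_completeTree]; omega
      · show m < min t2.rank (completeTree m).rank + 1
        rw [rank_completeTree]; omega
      · show min t1.rank (completeTree m).rank + 1 + t1.security + _ =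
          min t2.rank (completeTree m).rank + 1 + t2.security + _
        rw [rank_completeTree]
        have e1 : min t1.rank m = m := by omega
        have e2 : min t2.rank m = m := by omega
        rw [e1, e2, hsec]

end BTree

open BTree in
/-- Proposition (flip (1)): let `ℓ ≥ 2` have binary power representation
`L = (n₁, …, n_k)` and suppose `n_i = n_{i+1} + 1` for some `2 ≤ i ≤ k − 1`
(below, `A = (n₁, …, n_{i−1})` is nonempty, `a = n_i`, `b = n_{i+1}`, and `B` is the
rest).  Swapping the complete subtrees rooted at `c_i` and `c_{i+1}` (equivalently,
swapping the entries `n_i` and `n_{i+1}` in the construction of `T_L`) leaves the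
security unchanged. -/
theorem security_swap_subtrees (ℓ a b : ℕ) (A B : List ℕ) (hℓ : 2 ≤ ℓ)
    (hdec : (A ++ a :: b :: B).Chain' (· > ·))
    (hsum : ((A ++ a :: b :: B).map (2 ^ ·)).sum = ℓ)
    (hA : A ≠ []) (hab : a = b + 1) :
    (TL (A ++ a :: b :: B)).security = (TL (A ++ b :: a :: B)).security := by
  obtain ⟨n₁, A', rfl⟩ := List.exists_cons_of_ne_nil hA
  rw [List.cons_append] at hdec ⊢
  rw [show ((n₁ :: A') ++ b :: a :: B) = n₁ :: (A' ++ b :: a :: B) from List.cons_append ..]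
  simp only [TL, List.foldl_append, List.foldl_cons]
  set P := List.foldl (fun acc m => node acc (completeTree m)) (completeTree n₁) A' with hP
  have hchain : List.Chain (· > ·) n₁ (A' ++ a :: b :: B) := hdec
  have hPa : a < P.rank := by
    apply rank_fold_gt A' (completeTree n₁) n₁ a
    · have : List.Chain' (· > ·) (n₁ :: (A' ++ [a])) :=
        hdec.prefix ⟨b :: B, by simp⟩
      exact this
    · rw [rank_completeTree]
  have hchainB : List.Chain (· > ·) b B := by
    have : List.Chain' (· > ·) (b :: B) :=
      (hdec.suffix ⟨n₁ :: (A' ++ [a]), by simp⟩)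
    exact this
  apply sec_fold_congr B _ _ b hchainB
  · show b < min (min P.rank (completeTree a).rank + 1) (completeTree b).rank + 1
    rw [rank_completeTree, rank_completeTree]; omega
  · show b < min (min P.rank (completeTree b).rank + 1) (completeTree a).rank + 1
    rw [rank_completeTree, rank_completeTree]; omega
  · show min (min P.rank (completeTree a).rank + 1) (completeTree b).rank + 1 +
        (min P.rank (completeTree a).rank + 1 + P.security + (completeTree a).security) +
        (completeTree b).security =
      min (min P.rank (completeTree b).rank + 1) (completeTree a).rank + 1 +
        (min P.rank (completeTree b).rank + 1 + P.security + (completeTree b).security) +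
        (completeTree a).security
    rw [rank_completeTree, rank_completeTree]
    omega
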